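/- Let D̂₁,…,D̂ₙ ∈ Mat_N be pairwise commuting anti-hermitian matrices that are linearly independent over ℝ, let v₀ ∈ ℂ^N be a row vector of unit norm, let α₁,…,αₙ ∈ ℝ∖{0}, and set e_i = (0,…,0, α_i·v₀, 0,…,0) ∈ (ℂ^N)^n with α_i·v₀ in the i-th slot. Let h : (ℂ^N)^n × (ℂ^N)^n → Mat_N be additive in each argument, satisfy h(u, v·A) = h(u,v)·A for all A ∈ Mat_N, satisfy h(u,v)† = h(v,u), be nondegenerate (if h(u,v) = 0 for all v then u = 0), and suppose h(e_i, e_j) is hermitian for all i,j. Then the following are equivalent: (a) v₀ is a common left eigenvector of D̂₁,…,D̂ₙ, i.e., for each i there is λ_i ∈ ℂ with v₀·D̂_i = λ_i·v₀; (b) there exists a unique family of additive maps ∇₁,…,∇ₙ : (ℂ^N)^n → (ℂ^N)^n such that for all i,j,k, all v ∈ (ℂ^N)^n and all A ∈ Mat_N: ∇_i(v·A) = ∇_i(v)·A + v·(D̂_iA − AD̂_i); ∇_i(e_j) = ∇_j(e_i); h(e_i, ∇_j(e_k)) is hermitian; and D̂_i·h(u,v) − h(u,v)·D̂_i = h(∇_i(u),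 v) + h(u, ∇_i(v)) for all u,v. Moreover, in that case the unique such family is given by ∇_i(v) = λ_i·v − v·D̂_i, where λ_i is the eigenvalue with v₀·D̂_i = λ_i·v₀. -/

import Mathlib

open Matrix

/-- The right action of `Mat_N` on `(ℂ^N)^n` (tuples of row vectors). -/
noncomputable def rAct {N n : ℕ} (v : Fin n → Fin N → ℂ) (A : Matrix (Fin N) (Fin N) ℂ) :
    Fin n → Fin N → ℂ :=
  fun i => Matrix.vecMul (v i) A

/-- The family `∇₁, …, ∇ₙ` makes `(C_A, h)` a pseudo-Riemannian calculus: each `∇ᵢ` is an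
additive map satisfying the Leibniz rule for the derivation `A ↦ D̂ᵢA − AD̂ᵢ`, the family is
torsion-free on the generators `eᵢ`, satisfies the hermiticity condition, and is metric. -/
def PseudoRiemannian {N n : ℕ} (D : Fin n → Matrix (Fin N) (Fin N) ℂ)
    (e : Fin n → (Fin n → Fin N → ℂ))
    (h : (Fin n → Fin N → ℂ) → (Fin n → Fin N → ℂ) → Matrix (Fin N) (Fin N) ℂ)
    (nab : Fin n → (Fin n → Fin N → ℂ) → (Fin n → Fin N → ℂ)) : Prop :=
  (∀ i v w, nab i (v + w) = nab i v + nab i w) ∧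
  (∀ (i : Fin n) (v : Fin n → Fin N → ℂ) (A : Matrix (Fin N) (Fin N) ℂ),
    nab i (rAct v A) = rAct (nab i v) A + rAct v (D i * A - A * D i)) ∧
  (∀ i j, nab i (e j) = nab j (e i)) ∧
  (∀ i j l, (h (e i) (nab j (e l)))ᴴ = h (e i) (nab j (e l))) ∧
  (∀ (i : Fin n) (u v : Fin n → Fin N → ℂ),
    D i * h u v - h u v * D i = h (nab i u) v + h u (nab i v))

namespace Stmt16Aux

variable {N n : ℕ}

lemma rAct_add (v w : Fin n → Fin N → ℂ) (A : Matrix (Fin N) (Fin N) ℂ) :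
    rAct (v + w) A = rAct v A + rAct w A := by
  funext i; simp [rAct, Matrix.add_vecMul]

lemma rAct_sub (v w : Fin n → Fin N → ℂ) (A : Matrix (Fin N) (Fin N) ℂ) :
    rAct (v - w) A = rAct v A - rAct w A := by
  funext i; simp [rAct, Matrix.sub_vecMul]

lemma rAct_smul (c : ℂ) (v : Fin n → Fin N → ℂ) (A : Matrix (Fin N) (Fin N) ℂ) :
    rAct (c • v) A = c • rAct v A := by
  funext i; simp [rAct, Matrix.smul_vecMul]

lemma rAct_zero (A : Matrix (Fin N) (Fin N) ℂ) : rAct (0 : Fin n → Fin N → ℂ) A = 0 := by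
  funext i; simp [rAct]

lemma rAct_addA (v : Fin n → Fin N → ℂ) (A B : Matrix (Fin N) (Fin N) ℂ) :
    rAct v (A + B) = rAct v A + rAct v B := by
  funext i; simp [rAct, Matrix.vecMul_add]

lemma rAct_subA (v : Fin n → Fin N → ℂ) (A B : Matrix (Fin N) (Fin N) ℂ) :
    rAct v (A - B) = rAct v A - rAct v B := by
  funext i; simp [rAct, Matrix.vecMul_sub]

lemma rAct_mulA (v : Fin n → Fin N → ℂ) (A B : Matrix (Fin N) (Fin N) ℂ) :
    rAct v (A * B) = rAct (rAct v A) B := by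
  funext i; simp [rAct]

lemma rAct_one (v : Fin n → Fin N → ℂ) : rAct v 1 = v := by
  funext i; simp [rAct]

lemma rAct_zeroA (v : Fin n → Fin N → ℂ) : rAct v 0 = 0 := by
  funext i; simp [rAct]

lemma rAct_smulA (c : ℂ) (v : Fin n → Fin N → ℂ) (A : Matrix (Fin N) (Fin N) ℂ) :
    rAct v (c • A) = c • rAct v A := by
  funext i j
  simp only [rAct, Matrix.vecMul, dotProduct, Pi.smul_apply, Matrix.smul_apply,
    Finset.mul_sum, smul_eq_mul]
  exact Finset.sum_congr rfl fun _ _ => by ring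

lemma rAct_smul_one (c : ℂ) (v : Fin n → Fin N → ℂ) : rAct v (c • 1) = c • v := by
  rw [rAct_smulA, rAct_one]

lemma vecMul_smulM (z : Fin N → ℂ) (c : ℂ) (M : Matrix (Fin N) (Fin N) ℂ) :
    Matrix.vecMul z (c • M) = c • Matrix.vecMul z M := by
  have := congrFun (rAct_smulA c (fun _ : Fin 1 => z) M) 0
  simpa [rAct] using this

lemma vecMul_sumM {ι : Type*} (z : Fin N → ℂ) (s : Finset ι) (M : ι → Matrix (Fin N) (Fin N) ℂ) :
    Matrix.vecMul z (∑ l ∈ s, M l) = ∑ l ∈ s, Matrix.vecMul z (M l) := by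
  classical
  induction s using Finset.induction_on with
  | empty => simp
  | insert _ _ hx ih => rw [Finset.sum_insert hx, Finset.sum_insert hx, Matrix.vecMul_add, ih]

end Stmt16Aux

open Stmt16Aux in
/-- For pairwise commuting, ℝ-linearly independent anti-hermitian matrices
`D̂₁,…,D̂ₙ`, generators `eᵢ = (0,…,αᵢv₀,…,0)` with `v₀` a unit vector, and a metric `h` on
`(ℂ^N)^n` with `h(eᵢ,eⱼ)` hermitian, there is a unique family `∇₁,…,∇ₙ` making the calculus
pseudo-Riemannian iff `v₀` is a common left eigenvector of the `D̂ᵢ`; in that case the unique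
family is `∇ᵢ(v) = λᵢ·v − v·D̂ᵢ` with `v₀·D̂ᵢ = λᵢ·v₀`. -/
theorem stmt16 {N n : ℕ} (hN : 1 ≤ N) (hn : 1 ≤ n)
    (D : Fin n → Matrix (Fin N) (Fin N) ℂ)
    (hcomm : ∀ i j, D i * D j = D j * D i)
    (hah : ∀ i, (D i)ᴴ = -(D i))
    (hli : LinearIndependent ℝ D)
    (v₀ : Fin N → ℂ) (hv₀ : ∑ i, Complex.normSq (v₀ i) = 1)
    (α : Fin n → ℝ) (hα : ∀ i, α i ≠ 0)
    (e : Fin n → (Fin n → Fin N → ℂ))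
    (he : ∀ i j, e i j = if j = i then (α i : ℂ) • v₀ else 0)
    (h : (Fin n → Fin N → ℂ) → (Fin n → Fin N → ℂ) → Matrix (Fin N) (Fin N) ℂ)
    (hadd1 : ∀ u u' v, h (u + u') v = h u v + h u' v)
    (hadd2 : ∀ u v v', h u (v + v') = h u v + h u v')
    (hmul : ∀ (u v : Fin n → Fin N → ℂ) (A : Matrix (Fin N) (Fin N) ℂ),
        h u (rAct v A) = h u v * A)
    (hsym : ∀ u v, (h u v)ᴴ = h v u)
    (hnd : ∀ u, (∀ v, h u v = 0) → u = 0)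
    (hherm : ∀ i j, (h (e i) (e j))ᴴ = h (e i) (e j)) :
    ((∀ i, ∃ lam : ℂ, Matrix.vecMul v₀ (D i) = lam • v₀)
      ↔ ∃! nab : Fin n → (Fin n → Fin N → ℂ) → (Fin n → Fin N → ℂ),
          PseudoRiemannian D e h nab) ∧
    (∀ lam : Fin n → ℂ, (∀ i, Matrix.vecMul v₀ (D i) = lam i • v₀) →
      ∀ nab : Fin n → (Fin n → Fin N → ℂ) → (Fin n → Fin N → ℂ),
        PseudoRiemannian D e h nab ↔ nab = fun i v => lam i • v - rAct v (D i)) := by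
  classical
  have hα' : ∀ l, (α l : ℂ) ≠ 0 := fun l => Complex.ofReal_ne_zero.mpr (hα l)
  have hv₀c : v₀ ⬝ᵥ star v₀ = 1 := by
    have h1 : v₀ ⬝ᵥ star v₀ = ((∑ i, Complex.normSq (v₀ i) : ℝ) : ℂ) := by
      push_cast
      simp [dotProduct, Complex.mul_conj]
    rw [h1, hv₀]; norm_num
  set outer : (Fin N → ℂ) → Matrix (Fin N) (Fin N) ℂ :=
    fun w => Matrix.of fun a b => (starRingEnd ℂ) (v₀ a) * w b with houter
  have hvo : ∀ (z w : Fin N → ℂ), Matrix.vecMul z (outer w) = (z ⬝ᵥ star v₀) • w := by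
    intro z w; funext b
    simp only [houter, Matrix.vecMul, dotProduct, Matrix.of_apply, Pi.smul_apply,
      Pi.star_apply, smul_eq_mul, Finset.sum_mul]
    exact Finset.sum_congr rfl fun a _ => by simp [Complex.star_def]; ring
  have hvP : Matrix.vecMul v₀ (outer v₀) = v₀ := by rw [hvo, hv₀c, one_smul]
  -- lam₀ and uu
  set lam₀ : Fin n → ℂ := fun m => Matrix.vecMul v₀ (D m) ⬝ᵥ star v₀ with hlam₀
  set uu : Fin n → (Fin N → ℂ) := fun m => lam₀ m • v₀ - Matrix.vecMul v₀ (D m) with huu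
  have hu_perp : ∀ m, uu m ⬝ᵥ star v₀ = 0 := by
    intro m
    simp only [huu]
    simp only [sub_dotProduct, smul_dotProduct, hv₀c, smul_eq_mul, mul_one]
    simp only [hlam₀]; ring
  have hDvec : ∀ m, Matrix.vecMul v₀ (D m) = lam₀ m • v₀ - uu m := by
    intro m; simp only [huu]; exact (sub_sub_cancel _ _).symm
  have hlam₀im : ∀ m, (starRingEnd ℂ) (lam₀ m) = - lam₀ m := by
    intro m
    have hstar : ∀ (a b : Fin N → ℂ), star (a ⬝ᵥ b) = star a ⬝ᵥ star b := by
      intro a b; simp [dotProduct, star_sum]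
    have h1 : (starRingEnd ℂ) (lam₀ m) = star (Matrix.vecMul v₀ (D m)) ⬝ᵥ v₀ := by
      simp only [hlam₀]
      show star _ = _
      rw [hstar]; simp
    have h2 : lam₀ m = v₀ ⬝ᵥ (D m *ᵥ star v₀) := by
      simp only [hlam₀]
      exact (Matrix.dotProduct_mulVec _ _ _).symm
    rw [h1, Matrix.star_vecMul, hah m, Matrix.neg_mulVec, neg_dotProduct,
      dotProduct_comm, ← h2]
  -- decomposition
  set B : (Fin n → Fin N → ℂ) → Fin n → Matrix (Fin N) (Fin N) ℂ :=
    fun w l => ((α l : ℂ))⁻¹ • outer (w l) with hB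
  have hvoB : ∀ w l, Matrix.vecMul v₀ (B w l) = (α l : ℂ)⁻¹ • w l := by
    intro w l; simp only [hB]
    rw [vecMul_smulM, hvo, hv₀c, one_smul]
  have hrep : ∀ v : Fin n → Fin N → ℂ, ∑ l, rAct (e l) (B v l) = v := by
    intro v; funext m
    have h1 : (∑ l, rAct (e l) (B v l)) m = ∑ l, Matrix.vecMul (e l m) (B v l) := by
      simp [rAct]
    rw [h1, Finset.sum_eq_single m]
    · rw [he m m, if_pos rfl, Matrix.smul_vecMul, hvoB, smul_smul,
        mul_inv_cancel₀ (hα' m), one_smul]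
    · intro l _ hne
      rw [he l m, if_neg (Ne.symm hne), Matrix.zero_vecMul]
    · intro habs; exact absurd (Finset.mem_univ m) habs
  -- basic h-lemmas
  have h0_2 : ∀ u, h u 0 = 0 := by
    intro u
    have := hadd2 u 0 0
    simp only [add_zero] at this
    exact (left_eq_add.mp this)
  have hsum2 : ∀ (u : Fin n → Fin N → ℂ) (s : Finset (Fin n)) (g : Fin n → Fin n → Fin N → ℂ),
      h u (∑ l ∈ s, g l) = ∑ l ∈ s, h u (g l) := by
    intro u s g
    induction s using Finset.induction_on with
    | empty => simpa using h0_2 u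
    | insert _ _ hx ih => rw [Finset.sum_insert hx, Finset.sum_insert hx, hadd2, ih]
  have hsub2 : ∀ u v v', h u (v - v') = h u v - h u v' := by
    intro u v v'
    have := hadd2 u (v - v') v'
    rw [sub_add_cancel] at this
    exact eq_sub_of_add_eq this.symm
  have hsub1 : ∀ u u' v, h (u - u') v = h u v - h u' v := by
    intro u u' v
    have := hadd1 (u - u') u' v
    rw [sub_add_cancel] at this
    exact eq_sub_of_add_eq this.symm
  have hsmul2 : ∀ (c : ℂ) u v, h u (c • v) = c • h u v := by
    intro c u v
    rw [← rAct_smul_one c v, hmul, Matrix.mul_smul, mul_one]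
  have hmul1 : ∀ u v (A : Matrix (Fin N) (Fin N) ℂ), h (rAct u A) v = Aᴴ * h u v := by
    intro u v A
    have h1 : h (rAct u A) v = ((h (rAct u A) v)ᴴ)ᴴ := by rw [Matrix.conjTranspose_conjTranspose]
    rw [h1, hsym, hmul, Matrix.conjTranspose_mul, hsym]
  have hsmul1 : ∀ (c : ℂ) u v, h (c • u) v = (starRingEnd ℂ) c • h u v := by
    intro c u v
    have h1 : h (c • u) v = ((h (c • u) v)ᴴ)ᴴ := by rw [Matrix.conjTranspose_conjTranspose]
    rw [h1, hsym, hsmul2, Matrix.conjTranspose_smul, hsym]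
    rfl
  have hexp2 : ∀ u v, h u v = ∑ l, h u (e l) * B v l := by
    intro u v
    conv_lhs => rw [← hrep v]
    rw [hsum2]
    exact Finset.sum_congr rfl fun l _ => hmul u (e l) (B v l)
  have hinj : ∀ w, (∀ k, h (e k) w = 0) → w = 0 := by
    intro w hw
    apply hnd
    intro v
    rw [hexp2]
    apply Finset.sum_eq_zero
    intro l _
    have hwl : h w (e l) = 0 := by rw [← hsym, hw l, Matrix.conjTranspose_zero]
    rw [hwl, zero_mul]
  -- the metric on generators
  have hRactP : ∀ l, rAct (e l) (outer v₀) = e l := by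
    intro l; funext m
    show Matrix.vecMul (e l m) (outer v₀) = e l m
    rw [he l m]
    by_cases hm : m = l
    · rw [if_pos hm, Matrix.smul_vecMul, hvP]
    · rw [if_neg hm, Matrix.zero_vecMul]
  set c : Fin n → Fin n → ℂ :=
    fun k l => Matrix.vecMul v₀ (h (e k) (e l)) ⬝ᵥ star v₀ with hcdef
  have hgPr : ∀ k l, h (e k) (e l) * outer v₀ = h (e k) (e l) := by
    intro k l; rw [← hmul, hRactP]
  have hPH : (outer v₀)ᴴ = outer v₀ := by
    funext a b
    simp only [Matrix.conjTranspose_apply, houter, Matrix.of_apply, star_mul']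
    simp [Complex.star_def, mul_comm]
  have hgPl : ∀ k l, outer v₀ * h (e k) (e l) = h (e k) (e l) := by
    intro k l
    have h1 := congrArg Matrix.conjTranspose (hgPr k l)
    rw [Matrix.conjTranspose_mul, hPH, hherm] at h1
    exact h1
  have hvg : ∀ k l, Matrix.vecMul v₀ (h (e k) (e l)) = c k l • v₀ := by
    intro k l
    conv_lhs => rw [← hgPr k l]
    rw [← Matrix.vecMul_vecMul, hvo]
  have hgP : ∀ k l, h (e k) (e l) = c k l • outer v₀ := by
    intro k l
    funext a b
    have h1 : h (e k) (e l) a b = (outer v₀ * h (e k) (e l)) a b := by rw [hgPl]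
    rw [h1]
    have h2 : (outer v₀ * h (e k) (e l)) a b
        = (starRingEnd ℂ) (v₀ a) * (Matrix.vecMul v₀ (h (e k) (e l))) b := by
      simp only [Matrix.mul_apply, houter, Matrix.of_apply, Matrix.vecMul, dotProduct,
        Finset.mul_sum]
      exact Finset.sum_congr rfl fun x _ => by ring
    rw [h2, hvg]
    simp only [Matrix.smul_apply, houter, Matrix.of_apply, Pi.smul_apply, smul_eq_mul]
    ring
  have hcsym : ∀ k l, c k l = c l k := by
    intro k l
    have h1 : h (e k) (e l) = h (e l) (e k) := by rw [← hherm k l, hsym]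
    simp only [hcdef, h1]
  have hv0h : ∀ (k : Fin n) (w : Fin n → Fin N → ℂ),
      Matrix.vecMul v₀ (h (e k) w) = ∑ l, (c k l * (α l : ℂ)⁻¹) • w l := by
    intro k w
    rw [hexp2 (e k) w, vecMul_sumM]
    apply Finset.sum_congr rfl
    intro l _
    rw [hgP, smul_mul_assoc, vecMul_smulM, ← Matrix.vecMul_vecMul, hvP, hvoB, smul_smul]
  have hvDP : ∀ m, Matrix.vecMul (Matrix.vecMul v₀ (D m)) (outer v₀) = lam₀ m • v₀ := by
    intro m; simp only [hlam₀]; rw [hvo]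
  have hbrk : ∀ (m k l : Fin n),
      Matrix.vecMul v₀ (D m * h (e k) (e l) - h (e k) (e l) * D m) = c k l • uu m := by
    intro m k l
    rw [Matrix.vecMul_sub]
    simp only [← Matrix.vecMul_vecMul]
    rw [hvg k l, Matrix.smul_vecMul, hgP k l, vecMul_smulM, hvDP, ← smul_sub]
  -- additive maps and sums
  have haddsum : ∀ (nab : Fin n → (Fin n → Fin N → ℂ) → (Fin n → Fin N → ℂ)),
      (∀ i v w, nab i (v + w) = nab i v + nab i w) →
      (∀ i, nab i 0 = 0) ∧
      (∀ i (s : Finset (Fin n)) (g : Fin n → Fin n → Fin N → ℂ),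
        nab i (∑ l ∈ s, g l) = ∑ l ∈ s, nab i (g l)) := by
    intro nab hadd
    have h0 : ∀ i, nab i 0 = 0 := by
      intro i
      have := hadd i 0 0
      simp only [add_zero] at this
      exact left_eq_add.mp this
    refine ⟨h0, ?_⟩
    intro i s g
    induction s using Finset.induction_on with
    | empty => simpa using h0 i
    | insert _ _ hx ih => rw [Finset.sum_insert hx, Finset.sum_insert hx, hadd, ih]
  -- the Koszul-type identity
  have hAA : ∀ nab, PseudoRiemannian D e h nab → ∀ i j k,
      h (e k) (nab i (e j)) + h (e k) (nab i (e j)) =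
        ((D i * h (e j) (e k) - h (e j) (e k) * D i)
          + (D j * h (e i) (e k) - h (e i) (e k) * D j))
          - (D k * h (e i) (e j) - h (e i) (e j) * D k) := by
    intro nab hPR i j k
    obtain ⟨hA, hL, hT, hH, hM⟩ := hPR
    have hflip : ∀ a b c', h (nab a (e b)) (e c') = h (e c') (nab a (e b)) := by
      intro a b c'
      exact ((hsym (e c') (nab a (e b))).symm).trans (hH c' a b)
    have t1 := hM i (e j) (e k)
    have t2 := hM j (e i) (e k)
    have t3 := hM k (e i) (e j)
    rw [hflip] at t1 t2 t3
    rw [t1, t2, t3, hT j i, hT k i, hT k j]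
    abel
  -- expansion of nab over generators
  have hexpand : ∀ nab, PseudoRiemannian D e h nab → ∀ i v,
      nab i v = ∑ l, (rAct (nab i (e l)) (B v l) + rAct (e l) (D i * B v l - B v l * D i)) := by
    intro nab hPR i v
    obtain ⟨hA, hL, _, _, _⟩ := hPR
    obtain ⟨h0, hS⟩ := haddsum nab hA
    conv_lhs => rw [← hrep v]
    rw [hS]
    exact Finset.sum_congr rfl fun l _ => hL i (e l) (B v l)
  -- generic uniqueness
  have hgen_eq : ∀ nab nab', PseudoRiemannian D e h nab → PseudoRiemannian D e h nab' →
      ∀ i j, nab i (e j) = nab' i (e j) := by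
    intro nab nab' hP hP' i j
    have hsame : ∀ k, h (e k) (nab i (e j)) = h (e k) (nab' i (e j)) := by
      intro k
      have h2 : (2:ℂ) • h (e k) (nab i (e j)) = (2:ℂ) • h (e k) (nab' i (e j)) := by
        rw [two_smul, two_smul, hAA nab hP i j k, hAA nab' hP' i j k]
      exact smul_right_injective _ two_ne_zero h2
    have hz : ∀ k, h (e k) (nab i (e j) - nab' i (e j)) = 0 := by
      intro k; rw [hsub2, hsame, sub_self]
    exact sub_eq_zero.mp (hinj _ hz)
  have huniq : ∀ nab nab', PseudoRiemannian D e h nab → PseudoRiemannian D e h nab' →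
      nab = nab' := by
    intro nab nab' hP hP'
    funext i v
    rw [hexpand nab hP i v, hexpand nab' hP' i v]
    exact Finset.sum_congr rfl fun l _ => by rw [hgen_eq nab nab' hP hP' i l]
  -- the candidate family is pseudo-Riemannian
  have hcand : ∀ lam : Fin n → ℂ, (∀ i, Matrix.vecMul v₀ (D i) = lam i • v₀) →
      PseudoRiemannian D e h (fun i v => lam i • v - rAct v (D i)) := by
    intro lam hlam
    have hlam_eq : ∀ i, lam i = lam₀ i := by
      intro i
      simp only [hlam₀]
      rw [hlam i, smul_dotProduct, hv₀c, smul_eq_mul, mul_one]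
    have hconj : ∀ i, (starRingEnd ℂ) (lam i) = - lam i := by
      intro i; rw [hlam_eq i, hlam₀im i]
    have heej : ∀ i j, rAct (e j) (D i) = lam i • e j := by
      intro i j; funext m
      show Matrix.vecMul (e j m) (D i) = lam i • (e j m)
      rw [he j m]
      by_cases hm : m = j
      · rw [if_pos hm, Matrix.smul_vecMul, hlam i, smul_comm]
      · rw [if_neg hm, Matrix.zero_vecMul, smul_zero]
    refine ⟨?_, ?_, ?_, ?_, ?_⟩
    · intro i v w
      show lam i • (v + w) - rAct (v + w) (D i) = _
      rw [smul_add, rAct_add]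
      exact add_sub_add_comm _ _ _ _
    · intro i v A
      show lam i • rAct v A - rAct (rAct v A) (D i)
          = rAct (lam i • v - rAct v (D i)) A + rAct v (D i * A - A * D i)
      rw [rAct_sub, rAct_smul, rAct_subA, rAct_mulA, rAct_mulA]
      abel
    · intro i j
      show lam i • e j - rAct (e j) (D i) = lam j • e i - rAct (e i) (D j)
      rw [heej, heej, sub_self, sub_self]
    · intro i j l
      show (h (e i) (lam j • e l - rAct (e l) (D j)))ᴴ
          = h (e i) (lam j • e l - rAct (e l) (D j))
      rw [heej, sub_self, h0_2, Matrix.conjTranspose_zero]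
    · intro i u v
      show D i * h u v - h u v * D i
          = h (lam i • u - rAct u (D i)) v + h u (lam i • v - rAct v (D i))
      rw [hsub1, hsub2, hsmul1, hconj i, hsmul2, hmul, hmul1, hah i]
      simp only [Matrix.neg_mul, neg_smul]
      abel
  -- existence implies the eigenvector property
  have heig : ∀ nab, PseudoRiemannian D e h nab → ∀ m, uu m = 0 := by
    intro nab hPR
    obtain ⟨hA, hL, hT, hH, hM⟩ := hPR
    obtain ⟨h0, hS⟩ := haddsum nab hA
    have hdec : ∀ i j l, ∃ μ : ℂ,
        nab i (e j) l = μ • v₀ + (if l = j then (α j : ℂ) • uu i else 0) := by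
      intro i j l
      have hePz : rAct (e j) (1 - outer v₀) = 0 := by
        rw [rAct_subA, rAct_one, hRactP, sub_self]
      have heq := hL i (e j) (1 - outer v₀)
      rw [hePz, h0] at heq
      have h3 : rAct (e j) (D i * (1 - outer v₀) - (1 - outer v₀) * D i)
          = rAct (rAct (e j) (D i)) (1 - outer v₀) := by
        rw [rAct_subA, rAct_mulA, rAct_mulA, hePz, rAct_zero, sub_zero]
      rw [h3] at heq
      have h4 : (0 : Fin N → ℂ)
          = Matrix.vecMul (nab i (e j) l) (1 - outer v₀)
            + Matrix.vecMul ((rAct (e j) (D i)) l) (1 - outer v₀) := congrFun heq l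
      have hvm : ∀ z : Fin N → ℂ,
          Matrix.vecMul z (1 - outer v₀) = z - (z ⬝ᵥ star v₀) • v₀ := by
        intro z; rw [Matrix.vecMul_sub, Matrix.vecMul_one, hvo]
      rw [hvm, hvm] at h4
      have h5 : (rAct (e j) (D i)) l
          = if l = j then (α j : ℂ) • (lam₀ i • v₀ - uu i) else 0 := by
        show Matrix.vecMul (e j l) (D i) = _
        rw [he j l]
        by_cases hl : l = j
        · rw [if_pos hl, if_pos hl, Matrix.smul_vecMul, hDvec]
        · rw [if_neg hl, if_neg hl, Matrix.zero_vecMul]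
      have h6 : nab i (e j) l - (nab i (e j) l ⬝ᵥ star v₀) • v₀
          = ((rAct (e j) (D i) l ⬝ᵥ star v₀) • v₀ - rAct (e j) (D i) l) := by
        have h7 := h4.symm
        rw [add_eq_zero_iff_eq_neg] at h7
        rw [h7, neg_sub]
      have h8 : nab i (e j) l = (nab i (e j) l ⬝ᵥ star v₀) • v₀
          + ((rAct (e j) (D i) l ⬝ᵥ star v₀) • v₀ - rAct (e j) (D i) l) := by
        rw [← h6]; abel
      refine ⟨nab i (e j) l ⬝ᵥ star v₀, ?_⟩
      conv_lhs => rw [h8]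
      congr 1
      by_cases hl : l = j
      · rw [h5, if_pos hl, if_pos hl]
        rw [smul_dotProduct, sub_dotProduct, smul_dotProduct, hv₀c,
          hu_perp]
        simp only [smul_eq_mul, mul_one, sub_zero]
        module
      · rw [h5, if_neg hl, if_neg hl]
        simp
    have hE : ∀ i j k, c j k • uu i = c i k • uu j - c i j • uu k := by
      intro i j k
      have hvh : ∃ S : ℂ,
          Matrix.vecMul v₀ (h (e k) (nab i (e j))) = S • v₀ + c k j • uu i := by
        choose μ hμ using hdec i j
        refine ⟨∑ l, (c k l * (α l:ℂ)⁻¹ * μ l), ?_⟩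
        rw [hv0h k (nab i (e j))]
        have hterm : ∀ l, (c k l * (α l:ℂ)⁻¹) • (nab i (e j) l)
            = (c k l * (α l:ℂ)⁻¹ * μ l) • v₀
              + (if l = j then c k j • uu i else 0) := by
          intro l
          rw [hμ l, smul_add]
          congr 1
          · rw [smul_smul]
          · by_cases hl : l = j
            · subst hl
              rw [if_pos rfl, if_pos rfl, smul_smul, mul_assoc,
                inv_mul_cancel₀ (hα' l), mul_one]
            · rw [if_neg hl, if_neg hl, smul_zero]
        calc ∑ l, (c k l * (α l:ℂ)⁻¹) • (nab i (e j) l)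
            = ∑ l, ((c k l * (α l:ℂ)⁻¹ * μ l) • v₀
                + (if l = j then c k j • uu i else 0)) :=
              Finset.sum_congr rfl fun l _ => hterm l
          _ = (∑ l, (c k l * (α l:ℂ)⁻¹ * μ l)) • v₀ + c k j • uu i := by
              rw [Finset.sum_add_distrib, Finset.sum_ite_eq' Finset.univ j
                (fun _ => c k j • uu i), if_pos (Finset.mem_univ j), ← Finset.sum_smul]
      obtain ⟨S, hSv⟩ := hvh
      have hAAv := congrArg (Matrix.vecMul v₀) (hAA nab ⟨hA, hL, hT, hH, hM⟩ i j k)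
      rw [Matrix.vecMul_add, Matrix.vecMul_sub, Matrix.vecMul_add,
        hbrk i j k, hbrk j i k, hbrk k i j, hSv] at hAAv
      have hF := congrArg (fun z => Matrix.vecMul z (1 - outer v₀)) hAAv
      have hFv : Matrix.vecMul v₀ (1 - outer v₀) = 0 := by
        rw [Matrix.vecMul_sub, Matrix.vecMul_one, hvP, sub_self]
      have hFu : ∀ m', Matrix.vecMul (uu m') (1 - outer v₀) = uu m' := by
        intro m'
        rw [Matrix.vecMul_sub, Matrix.vecMul_one, hvo, hu_perp, zero_smul, sub_zero]
      simp only [Matrix.add_vecMul, Matrix.sub_vecMul, Matrix.smul_vecMul, hFv, hFu,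
        smul_zero, zero_add] at hF
      rw [hcsym k j] at hF
      have hF2 : c j k • uu i + c j k • uu i
          = c j k • uu i + (c i k • uu j - c i j • uu k) := by
        rw [hF]; abel
      exact add_left_cancel hF2
    have hkey : ∀ i j k, c i j • uu k = 0 := by
      intro i j k
      have h9 := hE i j k
      have h10 : c i k • uu j = c j k • uu i - c i j • uu k := by
        have h' := hE j i k
        rw [hcsym j i] at h'
        exact h'
      have h12 : c j k • uu i = c j k • uu i - (c i j • uu k + c i j • uu k) := by
        calc c j k • uu i = c i k • uu j - c i j • uu k := h9
          _ = (c j k • uu i - c i j • uu k) - c i j • uu k := by rw [h10]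
          _ = c j k • uu i - (c i j • uu k + c i j • uu k) := by abel
      have h13 : c i j • uu k + c i j • uu k = 0 := sub_eq_self.mp h12.symm
      have h14 : (2:ℂ) • (c i j • uu k) = 0 := by rw [two_smul]; exact h13
      rcases smul_eq_zero.mp h14 with h' | h'
      · exact absurd h' two_ne_zero
      · exact h'
    have hcnz : ∃ i j, c i j ≠ 0 := by
      by_contra hall
      push_neg at hall
      have hgz : ∀ k l, h (e k) (e l) = 0 := by
        intro k l; rw [hgP, hall, zero_smul]
      have hez : e ⟨0, hn⟩ = 0 := by
        apply hnd
        intro v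
        rw [hexp2]
        exact Finset.sum_eq_zero fun l _ => by rw [hgz, zero_mul]
      have he0 : e ⟨0, hn⟩ ⟨0, hn⟩ = 0 := by rw [hez]; rfl
      rw [he, if_pos rfl] at he0
      have hv00 : v₀ = 0 := by
        rcases smul_eq_zero.mp he0 with h' | h'
        · exact absurd h' (hα' _)
        · exact h'
      rw [hv00] at hv₀c
      simp at hv₀c
    intro m
    obtain ⟨i, j, hij⟩ := hcnz
    have := hkey i j m
    rcases smul_eq_zero.mp this with h' | h'
    · exact absurd h' hij
    · exact h'
  have heig' : ∀ nab, PseudoRiemannian D e h nab →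
      ∀ i, Matrix.vecMul v₀ (D i) = lam₀ i • v₀ := by
    intro nab hPR i
    have h1 := heig nab hPR i
    simp only [huu] at h1
    exact (sub_eq_zero.mp h1).symm
  constructor
  · constructor
    · intro hei
      choose lam hlam using hei
      exact ⟨_, hcand lam hlam, fun nab hnab => huniq nab _ hnab (hcand lam hlam)⟩
    · rintro ⟨nab, hnab, -⟩ i
      exact ⟨lam₀ i, heig' nab hnab i⟩
  · intro lam hlam nab
    constructor
    · intro hnab
      exact huniq nab _ hnab (hcand lam hlam)
    · rintro rfl
      exact hcand lam hlam
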